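/- Let T be a deterministic total top-down tree transducer with axiom A. If for every a ∈ Σ of rank k the tree T(a(x₁,...,x_k)) is subtree conform to A, then T is equivalent to a homomorphism. -/

import Mathlib

namespace TreeTrans

/-- Finite trees with nodes labeled by `α`. -/
inductive Tree (α : Type) : Type
  | node : α → List (Tree α) → Tree α

namespace Tree

variable {α β γ δ : Type}

def label : Tree α → α | node a _ => a
def children : Tree α → List (Tree α) | node _ ts => ts

/-- The height of a tree (a leaf has height 1). -/
def height : Tree α → ℕ
  | node _ ts => (ts.attach.map fun c => height c.1).foldr max 0 + 1
decreasing_by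
  have := List.sizeOf_lt_of_mem c.2
  simp only [Tree.node.sizeOf_spec]; omega

def mapLabel (f : α → β) : Tree α → Tree β
  | node a ts => node (f a) (ts.attach.map fun c => mapLabel f c.1)
decreasing_by
  have := List.sizeOf_lt_of_mem c.2
  simp only [Tree.node.sizeOf_spec]; omega

/-- The subtree rooted at a node (a node is a list of child indices). -/
def subtreeAt : Tree α → List ℕ → Option (Tree α)
  | t, [] => some t
  | node _ ts, i :: p =>
    match ts[i]? with
    | some c => subtreeAt c p
    | none => none

/-- The set `V(t)` of nodes of a tree. -/
def pos (t : Tree α) : Set (List ℕ) := {p | (t.subtreeAt p).isSome}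

/-- The label `t[v]` of a node (if the node exists). -/
def labelAt (t : Tree α) (p : List ℕ) : Option α := (t.subtreeAt p).map label

/-- The list of variable leaves (in left-to-right order) of a tree over `α ⊕ β`,
where `β` plays the role of the variables. -/
def varList : Tree (α ⊕ β) → List β
  | node (.inl _) ts => (ts.attach.map fun c => varList c.1).flatten
  | node (.inr x) _ => [x]
decreasing_by
  have := List.sizeOf_lt_of_mem c.2
  simp only [Tree.node.sizeOf_spec]; omega

/-- Substitution of the variables of a tree. -/
def substGen (f : γ → Tree (α ⊕ β)) : Tree (α ⊕ γ) → Tree (α ⊕ β)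
  | node (.inl a) ts => node (.inl a) (ts.attach.map fun c => substGen f c.1)
  | node (.inr x) _ => f x
decreasing_by
  have := List.sizeOf_lt_of_mem c.2
  simp only [Tree.node.sizeOf_spec]; omega

/-- View a tree over `α ⊕ β` as a tree over `α`; fails if a variable occurs. -/
def toDelta : Tree (α ⊕ β) → Option (Tree α)
  | node (.inl d) ts => ((ts.attach.map fun c => toDelta c.1).mapM id).map (node d)
  | node (.inr _) _ => none
decreasing_by
  have := List.sizeOf_lt_of_mem c.2
  simp only [Tree.node.sizeOf_spec]; omega

open Classical in
/-- The maximal common prefix pattern `t₁ ⊔ t₂` of two trees; positions where the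
trees differ are replaced by a variable (labeled `none`). -/
noncomputable def lcp : Tree α → Tree α → Tree (Option α)
  | node a ts, node b us =>
    if a = b ∧ ts.length = us.length then
      node (some a) ((ts.zip us).attach.map fun c => lcp c.1.1 c.1.2)
    else node none []
termination_by t _ => sizeOf t
decreasing_by
  obtain ⟨⟨x, y⟩, hm⟩ := c
  have := List.sizeOf_lt_of_mem (List.of_mem_zip hm).1
  simp only [Tree.node.sizeOf_spec]; omega

end Tree

open Tree

/-- A tree is well-formed w.r.t. a rank function if every node labeled `a`
has exactly `rank a` children. -/
def WF (rank : α → ℕ) (t : Tree α) : Prop :=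
  ∀ p u, t.subtreeAt p = some u → u.children.length = rank u.label

/-- Rank function on labels including variables (variables have rank 0). -/
def rankV (rank : α → ℕ) : α ⊕ β → ℕ := Sum.elim rank fun _ => 0

/-- All variable indices occurring in the tree are `< k`. -/
def VarsLt (k : ℕ) (t : Tree (α ⊕ β × ℕ)) : Prop := ∀ x ∈ varList t, x.2 < k

/-- Ground trees: no variables occur. -/
def GroundT (t : Tree (α ⊕ β)) : Prop := varList t = []

/-- Embedding of pure trees into trees possibly containing variables. -/
def embed : Tree α → Tree (α ⊕ β) := mapLabel Sum.inl

/-- The input tree `x₁`. -/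
def xvar {α : Type} : Tree (α ⊕ ℕ) := .node (.inr 0) []

/-- A context: a well-formed input tree containing exactly one variable,
namely `x₁` (index `0`). -/
def IsContext (rank : α → ℕ) (c : Tree (α ⊕ ℕ)) : Prop :=
  WF (rankV rank) c ∧ varList c = [0]

/-- A member of `T_Σ{X_k}`: each of the variables `x₁,…,x_k` occurs exactly once
and in left-to-right order. -/
def IsPattern (rank : α → ℕ) (k : ℕ) (s : Tree (α ⊕ ℕ)) : Prop :=
  WF (rankV rank) s ∧ varList s = List.range k

/-- `c·s`, plugging `s` into the unique variable of the context `c`. -/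
def plug (c : Tree (α ⊕ ℕ)) (s : Tree (α ⊕ β)) : Tree (α ⊕ β) :=
  substGen (fun _ => s) c

/-- A node labeled `b` (a "state-variable" leaf) occurs in `t`. -/
def OccursIn (t : Tree (α ⊕ β)) (b : β) : Prop := ∃ p, t.labelAt p = some (.inr b)

/-- `v` is the lowest common ancestor (longest common prefix) of the set `S` of nodes. -/
def IsLcaOf (S : Set (List ℕ)) (v : List ℕ) : Prop :=
  (∀ p ∈ S, v <+: p) ∧ ∀ w, (∀ p ∈ S, w <+: p) → w <+: v

/-- The set of nodes of `t` labeled `q(x_i)` for some state `q`. -/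
def varPos (t : Tree (α ⊕ β × γ)) (i : γ) : Set (List ℕ) :=
  {p | ∃ q : β, t.labelAt p = some (.inr (q, i))}

/-- An output tree is lca-conform if below the lowest common ancestor `ν(x_i)` of
the leaves labeled `q(x_i)` no leaf labeled `q(x_j)` with `j ≠ i` occurs. -/
def LcaConformTree (t : Tree (α ⊕ β × γ)) : Prop :=
  ∀ i v, IsLcaOf (varPos t i) v → ∀ u, t.subtreeAt v = some u →
    ∀ p q j, j ≠ i → u.labelAt p ≠ some (.inr (q, j))

/-- `t₁ ≃ t₂`: equality up to a bijective renaming of the variables. -/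
def Simeq (t₁ t₂ : Tree (α ⊕ β × ℕ)) : Prop :=
  ∃ f : ℕ → ℕ,
    Set.BijOn f {x | x ∈ (varList t₁).map Prod.snd} {x | x ∈ (varList t₂).map Prod.snd} ∧
    t₂ = mapLabel (Sum.map id (Prod.map id f)) t₁

/-- `t` is subtree conform to `t'`. -/
inductive SubtreeConform (t' : Tree (α ⊕ β × ℕ)) : Tree (α ⊕ β × ℕ) → Prop
  | ground (t) : GroundT t → SubtreeConform t' t
  | simeq (t) : Simeq t t' → SubtreeConform t' t
  | comp (d : α) (ts : List (Tree (α ⊕ β × ℕ))) :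
      (∀ c ∈ ts, SubtreeConform t' c) → SubtreeConform t' (.node (.inl d) ts)

/-- Second-order substitution: replace every leaf labeled `(q, i)` by `f q i`. -/
def applyRhs {Q Δ β : Type} (f : Q → ℕ → Tree (Δ ⊕ β)) :
    Tree (Δ ⊕ Q × ℕ) → Tree (Δ ⊕ β)
  | .node (.inl d) ts => .node (.inl d) (ts.attach.map fun c => applyRhs f c.1)
  | .node (.inr (q, i)) _ => f q i
decreasing_by
  have := List.sizeOf_lt_of_mem c.2
  simp only [Tree.node.sizeOf_spec]; omega

/-- Partial second-order substitution. -/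
def applyRhsO {Q Δ β : Type} (f : Q → ℕ → Option (Tree (Δ ⊕ β))) :
    Tree (Δ ⊕ Q × ℕ) → Option (Tree (Δ ⊕ β))
  | .node (.inl d) ts =>
      ((ts.attach.map fun c => applyRhsO f c.1).mapM id).map (.node (.inl d))
  | .node (.inr (q, i)) _ => f q i
decreasing_by
  have := List.sizeOf_lt_of_mem c.2
  simp only [Tree.node.sizeOf_spec]; omega

/-- A deterministic total top-down tree transducer. -/
structure TDTT (Q Sig Δ : Type) (rankS : Sig → ℕ) (rankD : Δ → ℕ) : Type where
  /-- the right-hand side `rhs_T(q,a) ∈ T_Δ[Q(X_k)]` of the rule for `(q,a)` -/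
  rhs : Q → Sig → Tree (Δ ⊕ Q × ℕ)
  /-- the axiom `A ∈ T_Δ[Q(X₁)]` -/
  axm : Tree (Δ ⊕ Q × ℕ)
  rhs_wf : ∀ q a, WF (rankV rankD) (rhs q a) ∧ VarsLt (rankS a) (rhs q a)
  axm_wf : WF (rankV rankD) axm ∧ VarsLt 1 axm

namespace TDTT

variable {Q Q' Sig Δ : Type} {rankS : Sig → ℕ} {rankD : Δ → ℕ}

/-- The semantics `[[q]] : T_Σ[X] → T_Δ[Q(X)]`. -/
def semState (T : TDTT Q Sig Δ rankS rankD) : Q → Tree (Sig ⊕ ℕ) → Tree (Δ ⊕ Q × ℕ)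
  | q, .node (.inl a) ss =>
      applyRhs (fun q' i =>
        match h : ss[i]? with
        | some s => T.semState q' s
        | none => .node (.inr (q', i)) []) (T.rhs q a)
  | q, .node (.inr x) _ => .node (.inr (q, x)) []
decreasing_by
  have hm : s ∈ ss := by
    exact List.mem_of_getElem? h
  have := List.sizeOf_lt_of_mem hm
  simp only [Tree.node.sizeOf_spec]; omega

/-- The translation `T(s) = A[q(x₁) ← [[q]](s)]`. -/
def run (T : TDTT Q Sig Δ rankS rankD) (s : Tree (Sig ⊕ ℕ)) : Tree (Δ ⊕ Q × ℕ) :=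
  applyRhs (fun q _ => T.semState q s) T.axm

/-- Equivalence of two transducers: equality on all ground input trees. -/
def Equiv (T : TDTT Q Sig Δ rankS rankD) (T' : TDTT Q' Sig Δ rankS rankD) : Prop :=
  ∀ s : Tree Sig, WF rankS s → toDelta (T.run (embed s)) = toDelta (T'.run (embed s))

/-- `T` is earliest: for each state, `⊔ {[[q]](s) | s ∈ T_Σ} = x₁`, i.e. there are two
ground input trees on which `[[q]]` produces different root symbols. -/
def Earliest (T : TDTT Q Sig Δ rankS rankD) : Prop :=
  ∀ q : Q, ∃ s₁ s₂ : Tree Sig, WF rankS s₁ ∧ WF rankS s₂ ∧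
    (T.semState q (embed s₁)).label ≠ (T.semState q (embed s₂)).label

/-- Distinct states realize distinct functions on ground trees. -/
def Canonical (T : TDTT Q Sig Δ rankS rankD) : Prop :=
  ∀ q₁ q₂ : Q, q₁ ≠ q₂ → ∃ s : Tree Sig, WF rankS s ∧
    T.semState q₁ (embed s) ≠ T.semState q₂ (embed s)

def CanonicalEarliest (T : TDTT Q Sig Δ rankS rankD) : Prop :=
  T.Earliest ∧ T.Canonical

/-- Linearity: every variable occurs at most once in the axiom and each right-hand side. -/
def Linear (T : TDTT Q Sig Δ rankS rankD) : Prop :=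
  ((varList T.axm).map Prod.snd).Nodup ∧
  ∀ q a, ((varList (T.rhs q a)).map Prod.snd).Nodup

/-- States `q₁` and `q₂` occur pairwise in `T`. -/
def PairwiseOccur (T : TDTT Q Sig Δ rankS rankD) (q₁ q₂ : Q) : Prop :=
  ∃ c, IsContext rankS c ∧ ∃ p₁ p₂, p₁ ≠ p₂ ∧
    (T.run c).labelAt p₁ = some (.inr (q₁, 0)) ∧
    (T.run c).labelAt p₂ = some (.inr (q₂, 0))

/-- `(q₁,q₂) ⊢^c (q₁',q₂')`. -/
def Step (T : TDTT Q Sig Δ rankS rankD) (q₁ q₂ : Q) (c : Tree (Sig ⊕ ℕ))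
    (q₁' q₂' : Q) : Prop :=
  OccursIn (T.semState q₁ c) (q₁', 0) ∧ OccursIn (T.semState q₂ c) (q₂', 0) ∧
  (T.semState q₁ c ≠ .node (.inr (q₁', 0)) [] ∨ T.semState q₂ c ≠ .node (.inr (q₂', 0)) [])

/-- `T` is zero output twinned. -/
def ZeroOutputTwinned (T : TDTT Q Sig Δ rankS rankD) : Prop :=
  ¬ ∃ q₁ q₂ c, T.PairwiseOccur q₁ q₂ ∧ IsContext rankS c ∧ c ≠ xvar ∧
      T.Step q₁ q₂ c q₁ q₂

/-- `T` is lca-conform. -/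
def LcaConform (T : TDTT Q Sig Δ rankS rankD) : Prop :=
  ∀ k (s : Tree (Sig ⊕ ℕ)), IsPattern rankS k s → LcaConformTree (T.run s)

/-- A homomorphism: a single-state transducer with axiom `q(x₁)`. -/
def IsHom (h : TDTT Unit Sig Δ rankS rankD) : Prop :=
  h.axm = .node (.inr ((), 0)) []

end TDTT

/-- The input tree `a(x₁,…,x_k)` where `k = rank a`. -/
def inputAtom (rankS : Sig → ℕ) (a : Sig) : Tree (Sig ⊕ ℕ) :=
  .node (.inl a) ((List.range (rankS a)).map fun i => .node (.inr i) [])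

/-- A deterministic (partial) top-down tree transducer with regular look-ahead. -/
structure LATT (Q Sig Δ L : Type) (rankS : Sig → ℕ) (rankD : Δ → ℕ) : Type where
  /-- the (possibly partial) transition function of the la-automaton -/
  delta : Sig → List L → Option L
  /-- the axiom `A(l) ∈ T_Δ[Q(X₁)]`, assigned exactly to the accepting la-states -/
  axm : L → Option (Tree (Δ ⊕ Q × ℕ))
  /-- the right-hand side of the rule for `(q, a, l₁,…,l_k)` (at most one rule) -/
  rhs : Q → Sig → List L → Option (Tree (Δ ⊕ Q × ℕ))
  axm_wf : ∀ l t, axm l = some t → WF (rankV rankD) t ∧ VarsLt 1 t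
  rhs_wf : ∀ q a ls t, rhs q a ls = some t →
    WF (rankV rankD) t ∧ VarsLt (rankS a) t ∧ ls.length = rankS a

namespace LATT

variable {Q Q' Sig Δ L L' : Type} {rankS : Sig → ℕ} {rankD : Δ → ℕ}

/-- The set `F` of accepting la-states. -/
def F (M : LATT Q Sig Δ L rankS rankD) : Set L := {l | (M.axm l).isSome}

/-- The extension `δ*` of the transition function to trees in `T_Σ[L]`. -/
def deltaStar (M : LATT Q Sig Δ L rankS rankD) : Tree (Sig ⊕ L) → Option L
  | .node (.inl a) ss =>
      ((ss.attach.map fun c => M.deltaStar c.1).mapM id).bind (M.delta a)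
  | .node (.inr l) _ => some l
decreasing_by
  have := List.sizeOf_lt_of_mem c.2
  simp only [Tree.node.sizeOf_spec]; omega

mutual
/-- `[[q]]_u(s)`: the semantics of state `q` at input node `u`. -/
def lsem (M : LATT Q Sig Δ L rankS rankD) (q : Q) (u : List ℕ) :
    Tree (Sig ⊕ L) → Option (Tree (Δ ⊕ Q × List ℕ))
  | .node (.inr _) _ => some (.node (.inr (q, u)) [])
  | .node (.inl a) ss =>
      match (ss.map fun s => M.deltaStar s).mapM id with
      | none => none
      | some ls =>
        match M.rhs q a ls with
        | none => none
        | some r =>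
          applyRhsO (fun q' i => (M.lsemList u 0 ss).getD i (fun _ => none) <| q') r
termination_by t => sizeOf t
decreasing_by
  simp only [Tree.node.sizeOf_spec]; omega
def lsemList (M : LATT Q Sig Δ L rankS rankD) (u : List ℕ) (i : ℕ) :
    List (Tree (Sig ⊕ L)) → List (Q → Option (Tree (Δ ⊕ Q × List ℕ)))
  | [] => []
  | s :: ss => (fun q' => M.lsem q' (u ++ [i]) s) :: M.lsemList u (i + 1) ss
termination_by l => sizeOf l
decreasing_by
  all_goals (simp only [List.cons.sizeOf_spec]; omega)
end

/-- The translation `M(s)` for `s ∈ T_Σ[L]` (defined iff `δ*(s) ∈ F` and all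
needed rules exist). -/
def lrun (M : LATT Q Sig Δ L rankS rankD) (s : Tree (Sig ⊕ L)) :
    Option (Tree (Δ ⊕ Q × List ℕ)) :=
  (M.deltaStar s).bind fun l => (M.axm l).bind fun ax =>
    applyRhsO (fun q _ => M.lsem q [] s) ax

/-- Equivalence of two la-transducers: the same partial function on ground trees. -/
def EquivL (M : LATT Q Sig Δ L rankS rankD) (N : LATT Q' Sig Δ L' rankS rankD) : Prop :=
  ∀ s : Tree Sig, WF rankS s →
    (M.lrun (embed s)).bind toDelta = (N.lrun (embed s)).bind toDelta

/-- Equivalence of an la-transducer and a total transducer without look-ahead. -/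
def EquivT (M : LATT Q Sig Δ L rankS rankD) (T : TDTT Q' Sig Δ rankS rankD) : Prop :=
  ∀ s : Tree Sig, WF rankS s →
    (M.lrun (embed s)).bind toDelta = toDelta (T.run (embed s))

/-- `M` is total. -/
def Total (M : LATT Q Sig Δ L rankS rankD) : Prop :=
  ∀ s : Tree Sig, WF rankS s → (M.lrun (embed s)).isSome

/-- `M` is la-uniform with la-map `ρ`. -/
def LaUniformWith (M : LATT Q Sig Δ L rankS rankD) (ρ : Q → L) : Prop :=
  (∀ l t, M.axm l = some t → ∀ q i, OccursIn t (q, i) → ρ q = l) ∧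
  (∀ q a ls, ls.length = rankS a → ((M.rhs q a ls).isSome ↔ M.delta a ls = some (ρ q))) ∧
  (∀ q a ls t, M.rhs q a ls = some t → ∀ q' i, OccursIn t (q', i) → ls[i]? = some (ρ q'))

/-- `M` is la-uniform. -/
def LaUniform (M : LATT Q Sig Δ L rankS rankD) : Prop := ∃ ρ, M.LaUniformWith ρ

/-- `M` (la-uniform via `ρ`) is earliest. -/
def EarliestWith (M : LATT Q Sig Δ L rankS rankD) (ρ : Q → L) : Prop :=
  ∀ q : Q, ∃ (s₁ s₂ : Tree Sig) (t₁ t₂ : Tree (Δ ⊕ Q × List ℕ)),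
    WF rankS s₁ ∧ WF rankS s₂ ∧
    M.deltaStar (embed s₁) = some (ρ q) ∧ M.deltaStar (embed s₂) = some (ρ q) ∧
    M.lsem q [] (embed s₁) = some t₁ ∧ M.lsem q [] (embed s₂) = some t₂ ∧
    t₁.label ≠ t₂.label

/-- Distinct states with the same look-ahead realize distinct functions. -/
def CanonWith (M : LATT Q Sig Δ L rankS rankD) (ρ : Q → L) : Prop :=
  ∀ q₁ q₂ : Q, q₁ ≠ q₂ → ρ q₁ = ρ q₂ → ∃ s : Tree Sig, WF rankS s ∧
    M.deltaStar (embed s) = some (ρ q₁) ∧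
    M.lsem q₁ [] (embed s) ≠ M.lsem q₂ [] (embed s)

/-- `M` is canonical earliest. -/
def CanonicalEarliest (M : LATT Q Sig Δ L rankS rankD) : Prop :=
  ∃ ρ, M.LaUniformWith ρ ∧ M.EarliestWith ρ ∧ M.CanonWith ρ

/-- Linearity of an la-transducer. -/
def Linear (M : LATT Q Sig Δ L rankS rankD) : Prop :=
  (∀ l t, M.axm l = some t → ((varList t).map Prod.snd).Nodup) ∧
  (∀ q a ls t, M.rhs q a ls = some t → ((varList t).map Prod.snd).Nodup)

/-- A trivial look-ahead automaton: the la-transducer is in effect a transducer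
without look-ahead. -/
def TrivialLA (M : LATT Q Sig Δ Unit rankS rankD) : Prop :=
  (∀ a ls, M.delta a ls = some ()) ∧ (M.axm ()).isSome

/-- A (possibly partial) homomorphism presented as a transducer without look-ahead:
single state, trivial look-ahead and axiom `q(x₁)`. -/
def IsHomLA (M : LATT Unit Sig Δ Unit rankS rankD) : Prop :=
  (∀ a ls, M.delta a ls = some ()) ∧ M.axm () = some (.node (.inr ((), 0)) [])

/-- `M` is lca-conform. -/
def LcaConform (M : LATT Q Sig Δ L rankS rankD) : Prop :=
  ∀ s : Tree (Sig ⊕ L), WF (rankV rankS) s →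
    ∀ t, M.lrun s = some t → LcaConformTree t

/-- `n` is a difference bound of `M`: an upper bound on the heights of all
difference trees of `M`. -/
def DifferenceBound (M : LATT Q Sig Δ L rankS rankD) (n : ℕ) : Prop :=
  ∀ (c : Tree (Sig ⊕ ℕ)) (l₁ l₂ : L) t₁ t₂, IsContext rankS c →
    M.lrun (plug c (.node (.inr l₁) [])) = some t₁ →
    M.lrun (plug c (.node (.inr l₂) [])) = some t₂ →
    ∀ v, (Tree.lcp t₁ t₂).labelAt v = some none →
      ∀ u₁ u₂, t₁.subtreeAt v = some u₁ → t₂.subtreeAt v = some u₂ →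
        u₁.height ≤ n ∧ u₂.height ≤ n

end LATT

mutual
/-- `graft tM tN p`: replace in `tN` (located at position `p` of the full tree) every
node not labeled by an output symbol by the subtree of `tM` at the same position. -/
def graft {Δ β β' : Type} (tM : Tree (Δ ⊕ β)) : Tree (Δ ⊕ β') → List ℕ → Tree (Δ ⊕ β)
  | .node (.inl d) ts, p => .node (.inl d) (graftList tM p 0 ts)
  | .node (.inr _) _, p => (tM.subtreeAt p).getD tM
termination_by t _ => sizeOf t
decreasing_by
  simp only [Tree.node.sizeOf_spec]; omega
def graftList {Δ β β' : Type} (tM : Tree (Δ ⊕ β)) (p : List ℕ) (i : ℕ) :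
    List (Tree (Δ ⊕ β')) → List (Tree (Δ ⊕ β))
  | [] => []
  | t :: ts => graft tM t (p ++ [i]) :: graftList tM p (i + 1) ts
termination_by l => sizeOf l
decreasing_by
  all_goals (simp only [List.cons.sizeOf_spec]; omega)
end

/-- A tree uses only symbols from `P`. -/
def UsesOnly {Sig : Type} (P : Set Sig) (s : Tree Sig) : Prop :=
  ∀ p u, s.subtreeAt p = some u → u.label ∈ P
open Tree
variable {α β β' γ Q Sig Δ : Type} {rankS : Sig → ℕ} {rankD : Δ → ℕ}

theorem tree_ind {motive : Tree α → Prop}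
    (h : ∀ a ts, (∀ c ∈ ts, motive c) → motive (.node a ts)) : ∀ t, motive t
  | .node a ts => h a ts (fun c hc => tree_ind h c)
decreasing_by have := List.sizeOf_lt_of_mem hc; simp only [Tree.node.sizeOf_spec]; omega

@[simp] theorem applyRhs_inl (d : Δ) (ts : List (Tree (Δ ⊕ Q × ℕ))) (f : Q → ℕ → Tree (Δ ⊕ β)) :
    applyRhs f (.node (.inl d) ts) = .node (.inl d) (ts.map (applyRhs f)) := by
  rw [applyRhs]; simp [List.attach_map_val]

@[simp] theorem applyRhs_inr (q : Q) (i : ℕ) (ts) (f : Q → ℕ → Tree (Δ ⊕ β)) :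
    applyRhs f (.node (.inr (q,i)) ts) = f q i := by rw [applyRhs]

@[simp] theorem varList_inl (a : α) (ts : List (Tree (α ⊕ β))) :
    varList (.node (.inl a) ts) = (ts.map varList).flatten := by
  rw [varList]; simp [List.attach_map_val]

@[simp] theorem varList_inr (x : β) (ts : List (Tree (α ⊕ β))) :
    varList (.node (.inr x) ts) = [x] := by rw [varList]

@[simp] theorem toDelta_inl (d : α) (ts : List (Tree (α ⊕ β))) :
    toDelta (.node (.inl d) ts) = ((ts.map toDelta).mapM id).map (.node d) := by
  rw [toDelta]; simp [List.attach_map_val]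

@[simp] theorem toDelta_inr (x : β) (ts : List (Tree (α ⊕ β))) :
    toDelta (.node (.inr x) ts) = none := by rw [toDelta]

@[simp] theorem mapLabel_node (f : α → β) (a : α) (ts : List (Tree α)) :
    mapLabel f (.node a ts) = .node (f a) (ts.map (mapLabel f)) := by
  rw [mapLabel]; simp [List.attach_map_val]

theorem mapLabel_comp (g : β → γ) (f : α → β) (t : Tree α) :
    mapLabel g (mapLabel f t) = mapLabel (g ∘ f) t := by
  induction t using tree_ind with
  | h a ts ih => simp [List.map_map]; exact ih

theorem varList_mapLabel (g : β → γ) (t : Tree (α ⊕ β)) :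
    varList (mapLabel (Sum.map id g) t) = (varList t).map g := by
  induction t using tree_ind with
  | h a ts ih =>
    cases a with
    | inl d => simp only [mapLabel_node, Sum.map_inl, varList_inl, List.map_map,
                 List.map_flatten]
               congr 1; exact List.map_congr_left fun c hc => ih c hc
    | inr x => simp


theorem wf_node_iff {rank : α → ℕ} {a : α} {ts : List (Tree α)} :
    WF rank (.node a ts) ↔ ts.length = rank a ∧ ∀ c ∈ ts, WF rank c := by
  constructor
  · intro h
    refine ⟨h [] _ rfl, fun c hc p u hu => ?_⟩
    obtain ⟨i, hi, hget⟩ := List.mem_iff_getElem.1 hc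
    refine h (i :: p) u ?_
    rw [subtreeAt]
    have : ts[i]? = some c := by rw [List.getElem?_eq_getElem hi, hget]
    rw [this]; exact hu
  · rintro ⟨hl, hc⟩ p u hu
    cases p with
    | nil => cases hu; exact hl
    | cons i p =>
      rw [subtreeAt] at hu
      cases hg : ts[i]? with
      | none => rw [hg] at hu; cases hu
      | some c => rw [hg] at hu; exact hc c (List.mem_of_getElem? hg) p u hu

theorem map_self {l : List α} {f : α → α} (h : ∀ a ∈ l, f a = a) : l.map f = l :=
  (List.map_congr_left h).trans (List.map_id l)

theorem applyRhs_congr {f f' : Q → ℕ → Tree (Δ ⊕ β)} {t : Tree (Δ ⊕ Q × ℕ)}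
    (h : ∀ q i, (q, i) ∈ varList t → f q i = f' q i) : applyRhs f t = applyRhs f' t := by
  induction t using tree_ind with
  | h a ts ih =>
    cases a with
    | inl d =>
      simp only [applyRhs_inl]
      exact congrArg _ (List.map_congr_left fun c hc => ih c hc fun q i hqi =>
        h q i (by simp only [varList_inl, List.mem_flatten]
                  exact ⟨varList c, List.mem_map_of_mem hc, hqi⟩))
    | inr x => obtain ⟨q, i⟩ := x; simp only [applyRhs_inr]; exact h q i (by simp)

theorem applyRhs_comp (g : γ → ℕ → Tree (Δ ⊕ β)) (f : Q → ℕ → Tree (Δ ⊕ γ × ℕ))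
    (t : Tree (Δ ⊕ Q × ℕ)) :
    applyRhs g (applyRhs f t) = applyRhs (fun q i => applyRhs g (f q i)) t := by
  induction t using tree_ind with
  | h a ts ih =>
    cases a with
    | inl d => simp only [applyRhs_inl, List.map_map]
               exact congrArg _ (List.map_congr_left fun c hc => ih c hc)
    | inr x => obtain ⟨q, i⟩ := x; simp

theorem applyRhs_mapLabel (f : Q → ℕ → Tree (Δ ⊕ β)) (r : ℕ → ℕ) (t : Tree (Δ ⊕ Q × ℕ)) :
    applyRhs f (mapLabel (Sum.map id (Prod.map id r)) t)
      = applyRhs (fun q i => f q (r i)) t := by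
  induction t using tree_ind with
  | h a ts ih =>
    cases a with
    | inl d => simp only [mapLabel_node, Sum.map_inl, id, applyRhs_inl, List.map_map]
               exact congrArg _ (List.map_congr_left fun c hc => ih c hc)
    | inr x => obtain ⟨q, i⟩ := x; simp [Prod.map]

theorem applyRhs_var_id {t : Tree (Δ ⊕ Q × ℕ)} (hwf : WF (rankV rankD) t) :
    applyRhs (fun q i => .node (.inr (q, i)) []) t = t := by
  induction t using tree_ind with
  | h a ts ih =>
    rw [wf_node_iff] at hwf
    cases a with
    | inl d => simp only [applyRhs_inl]
               exact congrArg _ (map_self fun c hc => ih c hc (hwf.2 c hc))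
    | inr x =>
      obtain ⟨q, i⟩ := x
      have : ts = [] := List.eq_nil_of_length_eq_zero hwf.1
      subst this; simp

theorem mapLabel_fix {g : β → β} {t : Tree (α ⊕ β)} {rank : α → ℕ}
    (hwf : WF (rankV rank) t) (h : ∀ x ∈ varList t, g x = x) :
    mapLabel (Sum.map id g) t = t := by
  induction t using tree_ind with
  | h a ts ih =>
    rw [wf_node_iff] at hwf
    cases a with
    | inl d =>
      simp only [mapLabel_node, Sum.map_inl, id]
      refine congrArg _ (map_self fun c hc => ih c hc (hwf.2 c hc)
        fun x hx => h x ?_)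
      simp only [varList_inl, List.mem_flatten]
      exact ⟨varList c, List.mem_map_of_mem hc, hx⟩
    | inr x =>
      have : ts = [] := List.eq_nil_of_length_eq_zero hwf.1
      subst this
      simp only [mapLabel_node, Sum.map_inr, List.map_nil]
      rw [h x (by simp)]

theorem wf_applyRhs {f : Q → ℕ → Tree (Δ ⊕ β)} {t : Tree (Δ ⊕ Q × ℕ)}
    (hwf : WF (rankV rankD) t) (hf : ∀ q i, WF (rankV rankD) (f q i)) :
    WF (rankV rankD) (applyRhs f t) := by
  induction t using tree_ind with
  | h a ts ih =>
    rw [wf_node_iff] at hwf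
    cases a with
    | inl d =>
      rw [applyRhs_inl, wf_node_iff]
      constructor
      · simpa [rankV] using hwf.1
      · intro c hc
        obtain ⟨c', hc', rfl⟩ := List.mem_map.1 hc
        exact ih c' hc' (hwf.2 c' hc')
    | inr x => obtain ⟨q, i⟩ := x; rw [applyRhs_inr]; exact hf q i

theorem varList_applyRhs {f : Q → ℕ → Tree (Δ ⊕ β)} {t : Tree (Δ ⊕ Q × ℕ)} {x : β}
    (hx : x ∈ varList (applyRhs f t)) :
    ∃ q i, (q, i) ∈ varList t ∧ x ∈ varList (f q i) := by
  induction t using tree_ind with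
  | h a ts ih =>
    cases a with
    | inl d =>
      rw [applyRhs_inl, varList_inl] at hx
      rw [List.mem_flatten] at hx
      obtain ⟨l, hl, hxl⟩ := hx
      rw [List.map_map, List.mem_map] at hl
      obtain ⟨c, hc, rfl⟩ := hl
      obtain ⟨q, i, hqi, hxf⟩ := ih c hc hxl
      refine ⟨q, i, ?_, hxf⟩
      simp only [varList_inl, List.mem_flatten]
      exact ⟨varList c, List.mem_map_of_mem hc, hqi⟩
    | inr y => obtain ⟨q, i⟩ := y; rw [applyRhs_inr] at hx; exact ⟨q, i, by simp, hx⟩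

theorem ground_inl_iff {d : α} {ts : List (Tree (α ⊕ β))} :
    GroundT (.node (.inl d) ts) ↔ ∀ c ∈ ts, GroundT c := by
  simp only [GroundT, varList_inl, List.flatten_eq_nil_iff]
  constructor
  · intro h c hc; exact h _ (List.mem_map_of_mem hc)
  · intro h l hl; obtain ⟨c, hc, rfl⟩ := List.mem_map.1 hl; exact h c hc

theorem toDelta_applyRhs_ground {t : Tree (α ⊕ Q × ℕ)} (hg : GroundT t)
    (f : Q → ℕ → Tree (α ⊕ β)) : toDelta (applyRhs f t) = toDelta t := by
  induction t using tree_ind with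
  | h a ts ih =>
    cases a with
    | inl d =>
      rw [ground_inl_iff] at hg
      simp only [applyRhs_inl, toDelta_inl, List.map_map]
      congr 2
      exact List.map_congr_left fun c hc => ih c hc (hg c hc)
    | inr x => exact absurd hg (by simp [GroundT])


namespace TDTT
theorem semState_inr (T : TDTT Q Sig Δ rankS rankD) (q : Q) (x : ℕ) (ts) :
    T.semState q (.node (.inr x) ts) = .node (.inr (q, x)) [] := by
  rw [semState]

theorem semState_inl (T : TDTT Q Sig Δ rankS rankD) (q : Q) (a : Sig)
    (ss : List (Tree (Sig ⊕ ℕ))) :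
    T.semState q (.node (.inl a) ss) = applyRhs (fun q' i =>
      match ss[i]? with
      | some s => T.semState q' s
      | none => .node (.inr (q', i)) []) (T.rhs q a) := by
  rw [semState]
  congr 1
  funext q' i
  cases hh : ss[i]? <;> simp [hh]

theorem semState_inputAtom (T : TDTT Q Sig Δ rankS rankD) (q : Q) (a : Sig) :
    T.semState q (inputAtom rankS a) = T.rhs q a := by
  rw [inputAtom, semState_inl]
  have : ∀ q' i, (match ((List.range (rankS a)).map
        fun i => (Tree.node (.inr i) [] : Tree (Sig ⊕ ℕ)))[i]? with
      | some s => T.semState q' s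
      | none => .node (.inr (q', i)) []) = (Tree.node (.inr (q', i)) [] : Tree (Δ ⊕ Q × ℕ)) := by
    intro q' i
    rcases lt_or_ge i (rankS a) with hi | hi
    · rw [List.getElem?_map, List.getElem?_range hi]
      exact T.semState_inr q' i []
    · rw [List.getElem?_eq_none (by simpa using hi)]
  calc applyRhs _ (T.rhs q a) = applyRhs (fun q' i => (.node (.inr (q', i)) [] : Tree (Δ ⊕ Q × ℕ)))
        (T.rhs q a) := by exact applyRhs_congr (fun q' i _ => this q' i)
    _ = T.rhs q a := applyRhs_var_id (T.rhs_wf q a).1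

theorem run_inputAtom (T : TDTT Q Sig Δ rankS rankD) (a : Sig) :
    T.run (inputAtom rankS a) = applyRhs (fun q _ => T.rhs q a) T.axm := by
  rw [run]
  exact applyRhs_congr fun q i _ => T.semState_inputAtom q a

theorem wf_run_inputAtom (T : TDTT Q Sig Δ rankS rankD) (a : Sig) :
    WF (rankV rankD) (T.run (inputAtom rankS a)) := by
  rw [run_inputAtom]
  exact wf_applyRhs T.axm_wf.1 fun q i => (T.rhs_wf q a).1

theorem varsLt_run_inputAtom (T : TDTT Q Sig Δ rankS rankD) (a : Sig) :
    VarsLt (rankS a) (T.run (inputAtom rankS a)) := by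
  rw [run_inputAtom]
  intro x hx
  obtain ⟨q, i, _, hxf⟩ := varList_applyRhs hx
  exact (T.rhs_wf q a).2 x hxf
end TDTT

/-- Rename all variable indices to `j`. -/
def ren {Δ Q : Type} (j : ℕ) : Tree (Δ ⊕ Q × ℕ) → Tree (Δ ⊕ Q × ℕ) :=
  mapLabel (Sum.map id (Prod.map id fun _ => j))

open Classical in
/-- Replace every copy `A[x₁ ↦ x_j]` of the axiom by the leaf `((), j)`. -/
noncomputable def homify {Δ Q : Type} (A : Tree (Δ ⊕ Q × ℕ)) :
    Tree (Δ ⊕ Q × ℕ) → Tree (Δ ⊕ Unit × ℕ)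
  | .node l ts =>
    if h : ¬ GroundT (Tree.node l ts) ∧ ∃ j, (Tree.node l ts) = ren j A then
      .node (.inr ((), h.2.choose)) []
    else match l with
      | .inl d => .node (.inl d) (ts.attach.map fun c => homify A c.1)
      | .inr x => .node (.inr ((), x.2)) []
decreasing_by
  have := List.sizeOf_lt_of_mem c.2
  simp only [Tree.node.sizeOf_spec]; omega

theorem homify_pos {A t : Tree (Δ ⊕ Q × ℕ)}
    (h : ¬ GroundT t ∧ ∃ j, t = ren j A) :
    ∃ j, homify A t = .node (.inr ((), j)) [] ∧ t = ren j A := by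
  obtain ⟨l, ts⟩ := t
  rw [homify, dif_pos h]
  exact ⟨h.2.choose, rfl, h.2.choose_spec⟩

theorem homify_neg_inl {A : Tree (Δ ⊕ Q × ℕ)} {d : Δ} {ts : List (Tree (Δ ⊕ Q × ℕ))}
    (h : ¬ (¬ GroundT (Tree.node (.inl d) ts) ∧ ∃ j, (Tree.node (.inl d) ts) = ren j A)) :
    homify A (.node (.inl d) ts) = .node (.inl d) (ts.map (homify A)) := by
  rw [homify, dif_neg h]
  simp [List.attach_map_val]

theorem varList_ren {A : Tree (Δ ⊕ Q × ℕ)} (j : ℕ) :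
    varList (ren j A) = (varList A).map (Prod.map id fun _ => j) :=
  varList_mapLabel _ A

theorem mem_snd_varList_of_ren {A t : Tree (Δ ⊕ Q × ℕ)} {j : ℕ}
    (ht : t = ren j A) (hng : ¬ GroundT t) : j ∈ (varList t).map Prod.snd := by
  subst ht
  rw [GroundT] at hng
  rw [varList_ren] at hng ⊢
  obtain ⟨x, hx⟩ := List.exists_mem_of_ne_nil _ hng
  obtain ⟨y, hy, rfl⟩ := List.mem_map.1 hx
  rw [List.mem_map]
  exact ⟨Prod.map id (fun _ => j) y, hx, rfl⟩

theorem homify_ground {A : Tree (Δ ⊕ Q × ℕ)} {t : Tree (Δ ⊕ Q × ℕ)} (hg : GroundT t) :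
    GroundT (homify A t) ∧ toDelta (homify A t) = toDelta t := by
  induction t using tree_ind with
  | h l ts ih =>
    have hcond : ¬ (¬ GroundT (Tree.node l ts) ∧ ∃ j, (Tree.node l ts) = ren j A) := by
      intro h; exact h.1 hg
    cases l with
    | inr x => exact absurd hg (by simp [GroundT])
    | inl d =>
      rw [homify_neg_inl hcond]
      rw [ground_inl_iff] at hg
      constructor
      · rw [ground_inl_iff]
        intro c hc
        obtain ⟨c', hc', rfl⟩ := List.mem_map.1 hc
        exact (ih c' hc' (hg c' hc')).1
      · simp only [toDelta_inl, List.map_map]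
        congr 2
        exact List.map_congr_left fun c hc => (ih c hc (hg c hc)).2

theorem homify_wf {A : Tree (Δ ⊕ Q × ℕ)} {t : Tree (Δ ⊕ Q × ℕ)}
    (hwf : WF (rankV rankD) t) : WF (rankV rankD) (homify A t) := by
  induction t using tree_ind with
  | h l ts ih =>
    by_cases hcond : ¬ GroundT (Tree.node l ts) ∧ ∃ j, (Tree.node l ts) = ren j A
    · obtain ⟨j, hj, _⟩ := homify_pos hcond
      rw [hj, wf_node_iff]
      exact ⟨rfl, by simp⟩
    · rw [wf_node_iff] at hwf
      cases l with
      | inl d =>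
        rw [homify_neg_inl hcond, wf_node_iff]
        refine ⟨by simpa [rankV] using hwf.1, fun c hc => ?_⟩
        obtain ⟨c', hc', rfl⟩ := List.mem_map.1 hc
        exact ih c' hc' (hwf.2 c' hc')
      | inr x =>
        obtain ⟨l, ts'⟩ : True := trivial
        rw [homify, dif_neg hcond, wf_node_iff]
        exact ⟨rfl, by simp⟩

theorem homify_vars {A : Tree (Δ ⊕ Q × ℕ)} {t : Tree (Δ ⊕ Q × ℕ)} {j : ℕ}
    (hj : j ∈ (varList (homify A t)).map Prod.snd) : j ∈ (varList t).map Prod.snd := by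
  induction t using tree_ind with
  | h l ts ih =>
    by_cases hcond : ¬ GroundT (Tree.node l ts) ∧ ∃ j, (Tree.node l ts) = ren j A
    · obtain ⟨j', hj', ht⟩ := homify_pos hcond
      rw [hj'] at hj
      simp only [varList_inr, List.map_cons, List.map_nil, List.mem_singleton] at hj
      subst hj
      exact mem_snd_varList_of_ren ht hcond.1
    · cases l with
      | inl d =>
        rw [homify_neg_inl hcond] at hj
        simp only [varList_inl, List.map_map, List.mem_map, List.mem_flatten] at hj ⊢
        obtain ⟨x, ⟨lvs, hlvs, hxl⟩, rfl⟩ := hj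
        obtain ⟨c, hc, rfl⟩ := hlvs
        simp only [Function.comp] at hxl
        have := ih c hc (by
          rw [List.mem_map]
          exact ⟨x, hxl, rfl⟩)
        rw [List.mem_map] at this
        obtain ⟨y, hy, hyx⟩ := this
        exact ⟨y, ⟨varList c, ⟨c, hc, rfl⟩, hy⟩, hyx⟩
      | inr x =>
        rw [homify, dif_neg hcond] at hj
        simp only [varList_inr, List.map_cons, List.map_nil, List.mem_singleton] at hj
        simp [hj]

theorem simeq_copy {A t : Tree (Δ ⊕ Q × ℕ)} {rankD : Δ → ℕ}
    (hs : Simeq t A) (hwf : WF (rankV rankD) t) (hA1 : VarsLt 1 A)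
    (hng : ¬ GroundT t) : ∃ j, t = ren j A := by
  obtain ⟨f, hbij, hA⟩ := hs
  rw [GroundT] at hng
  obtain ⟨x, hx⟩ := List.exists_mem_of_ne_nil _ hng
  refine ⟨x.2, ?_⟩
  have hxS : x.2 ∈ {y | y ∈ (varList t).map Prod.snd} := List.mem_map_of_mem hx
  -- every variable index of t equals x.2
  have hall : ∀ y ∈ varList t, y.2 = x.2 := by
    intro y hy
    have hyS : y.2 ∈ {z | z ∈ (varList t).map Prod.snd} := List.mem_map_of_mem hy
    have h0 : ∀ z ∈ {z | z ∈ (varList t).map Prod.snd}, f z = 0 := by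
      intro z hz
      have := hbij.1 hz
      simp only [Set.mem_setOf_eq, List.mem_map] at this
      obtain ⟨w, hw, hwz⟩ := this
      rw [← hwz]
      exact Nat.lt_one_iff.1 (hA1 w hw)
    exact hbij.2.1 hyS hxS ((h0 _ hyS).trans (h0 _ hxS).symm)
  rw [hA, ren, mapLabel_comp]
  have : (Sum.map id (Prod.map id fun _ => x.2) ∘ Sum.map id (Prod.map id f) :
      Δ ⊕ Q × ℕ → Δ ⊕ Q × ℕ) = Sum.map id ((Prod.map id fun _ => x.2) ∘ Prod.map id f) := by
    funext z; cases z <;> rfl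
  rw [this]
  exact (mapLabel_fix hwf fun y hy => by
    obtain ⟨q, i⟩ := y
    simp only [Function.comp, Prod.map]
    have := hall (q, i) hy
    simp at this
    simp [this]).symm

section Crux
variable {A : Tree (Δ ⊕ Q × ℕ)} {F : Q → ℕ → Tree (Δ ⊕ β)} {G : Unit → ℕ → Tree (Δ ⊕ β')}

theorem crux_ground {t : Tree (Δ ⊕ Q × ℕ)} (hg : GroundT t) :
    toDelta (applyRhs F t) = toDelta (applyRhs G (homify A t)) := by
  rw [toDelta_applyRhs_ground hg, toDelta_applyRhs_ground (homify_ground hg).1,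
    (homify_ground hg).2]

theorem crux_copy {t : Tree (Δ ⊕ Q × ℕ)}
    (hcond : ¬ GroundT t ∧ ∃ j, t = ren j A)
    (H : ∀ j, j ∈ (varList t).map Prod.snd →
      toDelta (applyRhs (fun q _ => F q j) A) = toDelta (G () j)) :
    toDelta (applyRhs F t) = toDelta (applyRhs G (homify A t)) := by
  obtain ⟨j, hj, ht⟩ := homify_pos hcond
  rw [hj, applyRhs_inr, ht, ren, applyRhs_mapLabel]
  exact H j (mem_snd_varList_of_ren ht hcond.1)

theorem crux {rankD : Δ → ℕ} (hA1 : VarsLt 1 A) {t : Tree (Δ ⊕ Q × ℕ)}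
    (hconf : SubtreeConform A t) :
    WF (rankV rankD) t →
    (∀ j, j ∈ (varList t).map Prod.snd →
      toDelta (applyRhs (fun q _ => F q j) A) = toDelta (G () j)) →
    toDelta (applyRhs F t) = toDelta (applyRhs G (homify A t)) := by
  induction hconf with
  | ground t hg => exact fun _ _ => crux_ground hg
  | simeq t hs =>
    intro hwf H
    by_cases hng : GroundT t
    · exact crux_ground hng
    · exact crux_copy ⟨hng, simeq_copy hs hwf hA1 hng⟩ H
  | comp d ts hts ih =>
    intro hwf H
    by_cases hcond : ¬ GroundT (Tree.node (.inl d) ts) ∧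
        ∃ j, (Tree.node (.inl d) ts) = ren j A
    · exact crux_copy hcond H
    · rw [homify_neg_inl hcond]
      simp only [applyRhs_inl, toDelta_inl, List.map_map]
      congr 2
      refine List.map_congr_left fun c hc => ?_
      have hwfc : WF (rankV rankD) c := (wf_node_iff.1 hwf).2 c hc
      have Hc : ∀ j, j ∈ (varList c).map Prod.snd →
          toDelta (applyRhs (fun q _ => F q j) A) = toDelta (G () j) := by
        intro j hj
        refine H j ?_
        obtain ⟨y, hy, rfl⟩ := List.mem_map.1 hj
        simp only [varList_inl, List.mem_map, List.mem_flatten]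
        exact ⟨y, ⟨varList c, ⟨c, hc, rfl⟩, hy⟩, rfl⟩
      exact ih c hc hwfc Hc
end Crux

theorem embed_node {a : α} {ts : List (Tree α)} :
    (embed (.node a ts) : Tree (α ⊕ β)) = .node (.inl a) (ts.map embed) := by
  rw [embed, mapLabel_node]

theorem hom_of_subtree_conform' {Q Sig Δ : Type}
    {rankS : Sig → ℕ} {rankD : Δ → ℕ}
    (T : TDTT Q Sig Δ rankS rankD)
    (hconf : ∀ a : Sig, SubtreeConform T.axm (T.run (inputAtom rankS a))) :
    ∃ h : TDTT Unit Sig Δ rankS rankD, h.IsHom ∧ T.Equiv h := by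
  classical
  refine ⟨{ rhs := fun _ a => homify T.axm (T.run (inputAtom rankS a)),
            axm := .node (.inr ((), 0)) [],
            rhs_wf := fun q a => ⟨homify_wf (T.wf_run_inputAtom a), fun x hx => ?_⟩,
            axm_wf := ⟨wf_node_iff.2 ⟨rfl, by simp⟩, fun x hx => ?_⟩ }, rfl, ?_⟩
  · -- VarsLt for rhs
    have := homify_vars (A := T.axm) (List.mem_map_of_mem (f := Prod.snd) hx)
    obtain ⟨y, hy, hyx⟩ := List.mem_map.1 this
    rw [← hyx]
    exact T.varsLt_run_inputAtom a y hy
  · -- VarsLt for axiom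
    simp only [varList_inr, List.mem_singleton] at hx
    simp [hx]
  · -- Equivalence
    intro s
    induction s using tree_ind with
    | h a ss ihs =>
      intro hwf
      set h : TDTT Unit Sig Δ rankS rankD :=
        { rhs := fun _ a => homify T.axm (T.run (inputAtom rankS a)),
          axm := .node (.inr ((), 0)) [],
          rhs_wf := _, axm_wf := _ } with hh
      have hlen : ss.length = rankS a := (wf_node_iff.1 hwf).1
      set F : Q → ℕ → Tree (Δ ⊕ Q × ℕ) := fun q' i =>
        match ss[i]? with
        | some s' => T.semState q' (embed s')
        | none => .node (.inr (q', i)) [] with hF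
      set G : Unit → ℕ → Tree (Δ ⊕ Unit × ℕ) := fun q' i =>
        match ss[i]? with
        | some s' => h.semState q' (embed s')
        | none => .node (.inr (q', i)) [] with hG
      have hmap : ∀ {γ : Type} (g : γ → ℕ → Tree (Sig ⊕ ℕ) → Tree (Δ ⊕ γ × ℕ)), True :=
        fun _ => trivial
      -- Step 1
      have step1 : T.run (embed (.node a ss)) = applyRhs F (T.run (inputAtom rankS a)) := by
        rw [TDTT.run, embed_node]
        have : ∀ q : Q, T.semState q (.node (.inl a) (ss.map embed))
            = applyRhs F (T.rhs q a) := by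
          intro q
          rw [TDTT.semState_inl]
          congr 1
          funext q' i
          rw [hF]
          cases hs : ss[i]? with
          | none => simp [List.getElem?_map, hs]
          | some s' => simp [List.getElem?_map, hs]
        calc applyRhs (fun q _ => T.semState q (.node (.inl a) (ss.map embed))) T.axm
            = applyRhs (fun q _ => applyRhs F (T.rhs q a)) T.axm := by
              exact applyRhs_congr fun q i _ => this q
          _ = applyRhs F (applyRhs (fun q _ => T.rhs q a) T.axm) := (applyRhs_comp _ _ _).symm
          _ = applyRhs F (T.run (inputAtom rankS a)) := by rw [T.run_inputAtom]
      -- Step 2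
      have step2 : h.run (embed (.node a ss))
          = applyRhs G (homify T.axm (T.run (inputAtom rankS a))) := by
        rw [TDTT.run]
        have hax : h.axm = .node (.inr ((() : Unit), 0)) [] := rfl
        rw [hax, applyRhs_inr, embed_node, TDTT.semState_inl]
        have hrhs : h.rhs () a = homify T.axm (T.run (inputAtom rankS a)) := rfl
        rw [hrhs]
        congr 1
        funext q' i
        rw [hG]
        cases hs : ss[i]? with
        | none => simp [List.getElem?_map, hs]
        | some s' => simp [List.getElem?_map, hs]
      rw [step1, step2]
      refine crux (rankD := rankD) T.axm_wf.2 (hconf a) (T.wf_run_inputAtom a) ?_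
      intro j hj
      obtain ⟨y, hy, rfl⟩ := List.mem_map.1 hj
      have hjk : y.2 < rankS a := T.varsLt_run_inputAtom a y hy
      have hjs : y.2 < ss.length := by omega
      have hss : ss[y.2]? = some ss[y.2] := List.getElem?_eq_getElem hjs
      have hFj : (fun (q : Q) (_ : ℕ) => F q y.2)
          = fun q _ => T.semState q (embed ss[y.2]) := by
        funext q i; rw [hF]; simp only [hss]
      have hGj : G () y.2 = h.semState () (embed ss[y.2]) := by
        rw [hG]; simp only [hss]
      rw [hFj, hGj]
      have hrunT : applyRhs (fun (q : Q) (_ : ℕ) => T.semState q (embed ss[y.2])) T.axm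
          = T.run (embed ss[y.2]) := rfl
      have hrunh : h.run (embed ss[y.2]) = h.semState () (embed ss[y.2]) := by
        rw [TDTT.run]
        have hax : h.axm = .node (.inr ((() : Unit), 0)) [] := rfl
        rw [hax, applyRhs_inr]
      rw [hrunT, ← hrunh]
      exact ihs ss[y.2] (List.getElem_mem hjs) ((wf_node_iff.1 hwf).2 _ (List.getElem_mem hjs))

/-- If for every `a ∈ Σ` the tree `T(a(x₁,…,x_k))` is subtree
conform to the axiom `A` of `T`, then `T` is equivalent to a homomorphism. -/
theorem hom_of_subtree_conform {Q Sig Δ : Type} [Fintype Q] [Fintype Sig] [Fintype Δ]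
    {rankS : Sig → ℕ} {rankD : Δ → ℕ}
    (T : TDTT Q Sig Δ rankS rankD)
    (hconf : ∀ a : Sig, SubtreeConform T.axm (T.run (inputAtom rankS a))) :
    ∃ h : TDTT Unit Sig Δ rankS rankD, h.IsHom ∧ T.Equiv h :=
  hom_of_subtree_conform' T hconf

end TreeTrans
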